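/- If A : ℝ → GL⁺(3,ℝ) is a C² solution of A''(t) = (det A(t))^{1-γ} (A(t)⁻¹)ᵀ with γ > 1, then the energy E(t) = (1/2) tr(A'(t) A'(t)ᵀ) + (γ-1)⁻¹ (det A(t))^{1-γ} is constant in t. -/

import Mathlib

open Matrix Filter Topology
noncomputable section
attribute [local instance] Matrix.normedAddCommGroup Matrix.normedSpace

abbrev M3 := Matrix (Fin 3) (Fin 3) ℝ

lemma trace_mul_transpose_eq (M : M3) :
    Matrix.trace (M * Mᵀ) = ∑ i, ∑ j, M i j * M i j := by
  simp [Matrix.trace, Matrix.diag, Matrix.mul_apply]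

lemma hasDerivAt_det3 {A : ℝ → M3} {B : M3} {t : ℝ}
    (h : ∀ i j, HasDerivAt (fun s => A s i j) (B i j) t) :
    HasDerivAt (fun s => (A s).det) (Matrix.trace (Matrix.adjugate (A t) * B)) t := by
  have key : (fun s => (A s).det) = fun s =>
      A s 0 0 * A s 1 1 * A s 2 2 - A s 0 0 * A s 1 2 * A s 2 1 - A s 0 1 * A s 1 0 * A s 2 2
      + A s 0 1 * A s 1 2 * A s 2 0 + A s 0 2 * A s 1 0 * A s 2 1 - A s 0 2 * A s 1 1 * A s 2 0 := by
    funext s; exact Matrix.det_fin_three _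
  rw [key]
  have H := ((((((((h 0 0).mul (h 1 1)).mul (h 2 2)).sub ((((h 0 0).mul (h 1 2)).mul (h 2 1)))).sub ((((h 0 1).mul (h 1 0)).mul (h 2 2)))).add ((((h 0 1).mul (h 1 2)).mul (h 2 0)))).add ((((h 0 2).mul (h 1 0)).mul (h 2 1)))).sub ((((h 0 2).mul (h 1 1)).mul (h 2 0))))
  refine H.congr_deriv ?_
  simp [Matrix.adjugate_fin_three, Matrix.trace, Matrix.diag, Matrix.mul_apply, Fin.sum_univ_three]
  ring

/-- conservation of energy for compressible affine motion. -/
theorem stmt3 (γ : ℝ) (hγ : 1 < γ) (A : ℝ → M3)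
    (hA : ContDiff ℝ 2 A)
    (hdet : ∀ t : ℝ, 0 < (A t).det)
    (hODE : ∀ t : ℝ, deriv (deriv A) t = ((A t).det ^ (1 - γ)) • ((A t)⁻¹)ᵀ) :
    ∀ t : ℝ,
      (1/2) * Matrix.trace (deriv A t * (deriv A t)ᵀ) + (γ - 1)⁻¹ * (A t).det ^ (1 - γ)
      = (1/2) * Matrix.trace (deriv A 0 * (deriv A 0)ᵀ) + (γ - 1)⁻¹ * (A 0).det ^ (1 - γ) := by
  have h2 : (2 : WithTop ℕ∞) = 1 + 1 := by norm_num
  rw [h2, contDiff_succ_iff_deriv] at hA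
  have hA1 : Differentiable ℝ A := hA.1
  have hB1 : Differentiable ℝ (deriv A) := hA.2.2.differentiable one_ne_zero
  set E : ℝ → ℝ := fun u =>
    (1/2) * (∑ i, ∑ j, deriv A u i j * deriv A u i j) + (γ - 1)⁻¹ * (A u).det ^ (1 - γ) with hEdef
  have hE : ∀ s, HasDerivAt E 0 s := by
    intro s
    set D : ℝ := (A s).det with hD
    set c : ℝ := D ^ (1 - γ) with hc
    set B : M3 := deriv A s with hB
    set B' : M3 := c • ((A s)⁻¹)ᵀ with hB'
    have ha : ∀ i j, HasDerivAt (fun u => A u i j) (B i j) s := fun i j =>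
      hasDerivAt_pi.mp (hasDerivAt_pi.mp (hA1 s).hasDerivAt i) j
    have hbM : HasDerivAt (deriv A) B' s := by
      have := (hB1 s).hasDerivAt
      exact this.congr_deriv (hODE s)
    have hb : ∀ i j, HasDerivAt (fun u => deriv A u i j) (B' i j) s := fun i j =>
      hasDerivAt_pi.mp (hasDerivAt_pi.mp hbM i) j
    have hDet : HasDerivAt (fun u => (A u).det)
        (Matrix.trace (Matrix.adjugate (A s) * B)) s := hasDerivAt_det3 ha
    have hpow : HasDerivAt (fun u => (A u).det ^ (1 - γ))
        (((1 - γ) * D ^ (1 - γ - 1)) * Matrix.trace (Matrix.adjugate (A s) * B)) s :=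
      by have h := (Real.hasDerivAt_rpow_const (x := D) (p := 1 - γ) (Or.inl (hdet s).ne')).comp s hDet; exact h
    have htr : HasDerivAt (fun u => ∑ i, ∑ j, deriv A u i j * deriv A u i j)
        (∑ i, ∑ j, (B' i j * B i j + B i j * B' i j)) s :=
      HasDerivAt.fun_sum fun i _ => HasDerivAt.fun_sum fun j _ => (hb i j).fun_mul (hb i j)
    have HE := (htr.const_mul ((1:ℝ)/2)).add (hpow.const_mul (γ - 1)⁻¹)
    have hadj : Matrix.adjugate (A s) = D • (A s)⁻¹ := by
      rw [Matrix.inv_def, Ring.inverse_eq_inv', smul_smul, mul_inv_cancel₀ (hdet s).ne', one_smul]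
    set τ : ℝ := Matrix.trace ((A s)⁻¹ * B) with hτ
    have hT : Matrix.trace (Matrix.adjugate (A s) * B) = D * τ := by
      rw [hadj, Matrix.smul_mul, Matrix.trace_smul, smul_eq_mul]
    have hS : (∑ i, ∑ j, (B' i j * B i j + B i j * B' i j)) = 2 * c * τ := by
      simp [hτ, hB', Matrix.trace, Matrix.diag, Matrix.mul_apply, Fin.sum_univ_three,
        Matrix.smul_apply, smul_eq_mul]
      ring
    have hcD : D ^ (1 - γ - 1) * D = c := by
      rw [hc, ← Real.rpow_add_one (hdet s).ne' (1 - γ - 1), hD]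
      congr 1
      ring
    have hzero : (1/2) * (∑ i, ∑ j, (B' i j * B i j + B i j * B' i j))
        + (γ - 1)⁻¹ * (((1 - γ) * D ^ (1 - γ - 1)) * Matrix.trace (Matrix.adjugate (A s) * B))
        = 0 := by
      rw [hS, hT]
      have hne : γ - 1 ≠ 0 := sub_ne_zero.mpr (ne_of_gt hγ)
      have h3 : (1 - γ) * D ^ (1 - γ - 1) * (D * τ) = (1 - γ) * (c * τ) := by
        rw [← hcD]; ring
      rw [h3]
      field_simp
      ring
    rw [hzero] at HE
    exact HE
  intro t
  have key : E t = E 0 :=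
    is_const_of_deriv_eq_zero (fun s => (hE s).differentiableAt)
      (fun s => (hE s).deriv) t 0
  simpa [hEdef, trace_mul_transpose_eq] using key
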